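/- If C ⊂ ℝⁿ is a closed convex cone containing its dual cone C*, then there exists a self-dual closed convex cone K with C* ⊆ K ⊆ C. -/

import Mathlib

open RealInnerProductSpace Set

variable {n : ℕ}

lemma aux_closure_inner (M : Set (EuclideanSpace ℝ (Fin n)))
    (h : ∀ x ∈ M, ∀ y ∈ M, 0 ≤ ⟪x, y⟫) :
    ∀ x ∈ closure M, ∀ y ∈ closure M, 0 ≤ ⟪x, y⟫ := by
  have step1 : ∀ y ∈ M, ∀ x ∈ closure M, 0 ≤ ⟪x, y⟫ := by
    intro y hy x hx
    have hcl : IsClosed {x : EuclideanSpace ℝ (Fin n) | 0 ≤ ⟪x, y⟫} :=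
      isClosed_le continuous_const (continuous_id.inner continuous_const)
    exact hcl.closure_subset_iff.2 (fun z hz => h z hz y hy) hx
  intro x hx y hy
  have hcl : IsClosed {y : EuclideanSpace ℝ (Fin n) | 0 ≤ ⟪x, y⟫} :=
    isClosed_le continuous_const (continuous_const.inner continuous_id)
  exact hcl.closure_subset_iff.2 (fun z hz => step1 z hz x hx) hy

lemma aux_closure_cone (M : Set (EuclideanSpace ℝ (Fin n)))
    (h : ∀ x ∈ M, ∀ r : ℝ, 0 ≤ r → r • x ∈ M) :
    ∀ x ∈ closure M, ∀ r : ℝ, 0 ≤ r → r • x ∈ closure M := by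
  intro x hx r hr
  exact map_mem_closure (continuous_const_smul r) hx (fun z hz => h z hz r hr)

theorem exists_self_dual_cone_between {n : ℕ}
    (C : Set (EuclideanSpace ℝ (Fin n)))
    (hclosed : IsClosed C) (hconv : Convex ℝ C)
    (hcone : ∀ x ∈ C, ∀ r : ℝ, 0 ≤ r → r • x ∈ C)
    (hdual : {y : EuclideanSpace ℝ (Fin n) | ∀ x ∈ C, 0 ≤ ⟪y, x⟫} ⊆ C) :
    ∃ K : Set (EuclideanSpace ℝ (Fin n)), IsClosed K ∧ Convex ℝ K ∧
      (∀ x ∈ K, ∀ r : ℝ, 0 ≤ r → r • x ∈ K) ∧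
      K = {y : EuclideanSpace ℝ (Fin n) | ∀ x ∈ K, 0 ≤ ⟪y, x⟫} ∧
      {y : EuclideanSpace ℝ (Fin n) | ∀ x ∈ C, 0 ≤ ⟪y, x⟫} ⊆ K ∧ K ⊆ C := by
  set Cs : Set (EuclideanSpace ℝ (Fin n)) := {y : (EuclideanSpace ℝ (Fin n)) | ∀ x ∈ C, 0 ≤ ⟪y, x⟫} with hCs
  have hzeroCs : (0 : (EuclideanSpace ℝ (Fin n))) ∈ Cs := by
    intro x hx; rw [inner_zero_left]
  have hzeroC : (0 : (EuclideanSpace ℝ (Fin n))) ∈ C := hdual hzeroCs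
  -- the bipolar theorem
  have hbipolar : {y : (EuclideanSpace ℝ (Fin n)) | ∀ z ∈ Cs, 0 ≤ ⟪y, z⟫} ⊆ C := by
    have hadd : ∀ x ∈ C, ∀ y ∈ C, x + y ∈ C := by
      intro x hx y hy
      have h2 := hconv hx hy (by norm_num : (0:ℝ) ≤ 1/2) (by norm_num : (0:ℝ) ≤ 1/2)
        (by norm_num)
      have := hcone _ h2 2 (by norm_num)
      rwa [smul_add, smul_smul, smul_smul, show (2:ℝ) * (1/2) = 1 by norm_num,
        one_smul, one_smul] at this
    let Ccone : ConvexCone ℝ (EuclideanSpace ℝ (Fin n)) :=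
      { carrier := C
        smul_mem' := fun c hc x hx => hcone x hx c hc.le
        add_mem' := fun x hx y hy => hadd x hx y hy }
    let Cp : ProperCone ℝ (EuclideanSpace ℝ (Fin n)) :=
      { carrier := C
        add_mem' := fun {x y} hx hy => hadd x hx y hy
        zero_mem' := hzeroC
        smul_mem' := fun c x hx => hcone x hx c c.2
        isClosed' := hclosed }
    intro y hy
    by_contra hyC
    obtain ⟨z, hz, hzy⟩ := ProperCone.hyperplane_separation' Cp (x₀ := y) hyC
    have hzCs : z ∈ Cs := fun x hx => by rw [real_inner_comm]; exact hz x hx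
    have := hy z hzCs
    linarith
  -- the family of intermediate cones
  set S : Set (Set (EuclideanSpace ℝ (Fin n))) := {D | IsClosed D ∧ Convex ℝ D ∧
      (∀ x ∈ D, ∀ r : ℝ, 0 ≤ r → r • x ∈ D) ∧ Cs ⊆ D ∧
      ∀ x ∈ D, ∀ y ∈ D, 0 ≤ ⟪x, y⟫} with hS
  have hCsS : Cs ∈ S := by
    refine ⟨?_, ?_, ?_, Subset.rfl, ?_⟩
    · have : Cs = ⋂ x ∈ C, {y : (EuclideanSpace ℝ (Fin n)) | 0 ≤ ⟪y, x⟫} := by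
        ext y; simp [hCs]
      rw [this]
      exact isClosed_biInter fun x _ =>
        isClosed_le continuous_const (continuous_id.inner continuous_const)
    · intro y1 h1 y2 h2 a b ha hb hab x hx
      rw [inner_add_left, real_inner_smul_left, real_inner_smul_left]
      exact add_nonneg (mul_nonneg ha (h1 x hx)) (mul_nonneg hb (h2 x hx))
    · intro y hy r hr x hx
      rw [real_inner_smul_left]
      exact mul_nonneg hr (hy x hx)
    · intro x hx y hy
      exact hx y (hdual hy)
  -- Zorn's lemma
  have hchainU : ∀ c ⊆ S, IsChain (· ⊆ ·) c → c.Nonempty →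
      ∃ ub ∈ S, ∀ s ∈ c, s ⊆ ub := by
    intro c hcS hchain hcne
    refine ⟨closure (⋃₀ c), ?_, fun s hs => (subset_sUnion_of_mem hs).trans subset_closure⟩
    obtain ⟨D0, hD0⟩ := hcne
    have hU : ∀ x ∈ ⋃₀ c, ∀ y ∈ ⋃₀ c, 0 ≤ ⟪x, y⟫ := by
      rintro x ⟨D1, hD1, hx⟩ y ⟨D2, hD2, hy⟩
      rcases hchain.total hD1 hD2 with h | h
      · exact (hcS hD2).2.2.2.2 x (h hx) y hy
      · exact (hcS hD1).2.2.2.2 x hx y (h hy)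
    refine ⟨isClosed_closure, ?_, ?_, ?_, ?_⟩
    · -- convex
      refine Convex.closure ?_
      rintro x ⟨D1, hD1, hx⟩ y ⟨D2, hD2, hy⟩ a b ha hb hab
      rcases hchain.total hD1 hD2 with h | h
      · exact ⟨D2, hD2, (hcS hD2).2.1 (h hx) hy ha hb hab⟩
      · exact ⟨D1, hD1, (hcS hD1).2.1 hx (h hy) ha hb hab⟩
    · -- cone
      refine aux_closure_cone _ ?_
      rintro x ⟨D1, hD1, hx⟩ r hr
      exact ⟨D1, hD1, (hcS hD1).2.2.1 x hx r hr⟩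
    · exact ((hcS hD0).2.2.2.1.trans (subset_sUnion_of_mem hD0)).trans subset_closure
    · exact aux_closure_inner _ hU
  obtain ⟨K, hCsK, hmax⟩ := zorn_subset_nonempty S hchainU Cs hCsS
  obtain ⟨hKclosed, hKconv, hKcone, hCsK', hKinner⟩ := hmax.1
  -- K is self-dual
  have hself : K = {y : (EuclideanSpace ℝ (Fin n)) | ∀ x ∈ K, 0 ≤ ⟪y, x⟫} := by
    apply Subset.antisymm
    · intro k hk x hx
      exact hKinner k hk x hx
    · intro x hx
      by_contra hxK
      set M : Set (EuclideanSpace ℝ (Fin n)) := {z | ∃ k ∈ K, ∃ t : ℝ, 0 ≤ t ∧ z = k + t • x} with hM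
      have hKM : K ⊆ M := fun k hk => ⟨k, hk, 0, le_refl 0, by rw [zero_smul, add_zero]⟩
      have hMinner : ∀ a ∈ M, ∀ b ∈ M, 0 ≤ ⟪a, b⟫ := by
        rintro a ⟨k1, hk1, t1, ht1, rfl⟩ b ⟨k2, hk2, t2, ht2, rfl⟩
        rw [inner_add_left, inner_add_right, inner_add_right, real_inner_smul_left,
          real_inner_smul_right, real_inner_smul_left, real_inner_smul_right]
        have h1 : 0 ≤ ⟪k1, k2⟫ := hKinner k1 hk1 k2 hk2
        have h2 : 0 ≤ ⟪k1, x⟫ := by rw [real_inner_comm]; exact hx k1 hk1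
        have h3 : 0 ≤ ⟪x, k2⟫ := hx k2 hk2
        have h4 : 0 ≤ ⟪x, x⟫ := real_inner_self_nonneg
        positivity
      have hDS : closure M ∈ S := by
        refine ⟨isClosed_closure, Convex.closure ?_, aux_closure_cone _ ?_,
          hCsK'.trans (hKM.trans subset_closure), aux_closure_inner _ hMinner⟩
        · rintro a ⟨k1, hk1, t1, ht1, rfl⟩ b ⟨k2, hk2, t2, ht2, rfl⟩ p q hp hq hpq
          refine ⟨p • k1 + q • k2, hKconv hk1 hk2 hp hq hpq, p * t1 + q * t2,
            add_nonneg (mul_nonneg hp ht1) (mul_nonneg hq ht2), ?_⟩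
          rw [smul_add, smul_add, smul_smul, smul_smul, add_smul]
          abel
        · rintro a ⟨k, hk, t, ht, rfl⟩ r hr
          exact ⟨r • k, hKcone k hk r hr, r * t, mul_nonneg hr ht, by
            rw [smul_add, smul_smul]⟩
      have hsub : closure M ⊆ K := hmax.2 hDS (hKM.trans subset_closure)
      exact hxK (hsub (subset_closure ⟨0, hCsK' hzeroCs, 1, zero_le_one, by
        rw [one_smul, zero_add]⟩))
  -- K ⊆ C
  have hKC : K ⊆ C := by
    intro k hk
    apply hbipolar
    intro z hz
    rw [hself] at hk
    exact hk z (hCsK' hz)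
  exact ⟨K, hKclosed, hKconv, hKcone, hself, hCsK', hKC⟩
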